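/- arXiv:1102.3138 — 5 statements merged into one kernel-verified Lean document; each statement's English description precedes it below -/
import Mathlib

section
/- Let (Z, ρ) be a complete CAT(1) metric space and let p, q ∈ Z with ρ(p,q) = π. Then the equator E(p,q) = {x ∈ Z | ρ(p,x) = ρ(x,q) = π/2} is closed and π-convex: for any a, b ∈ E(p,q) with ρ(a,b) < π, every point on the geodesic segment [a,b] lies in E(p,q). -/
open Set InnerProductGeometry
open scoped RealInnerProductSpace

/-- `γ` is a unit-speed geodesic segment from `x` to `y`, parametrized on `[0, dist x y]`. -/
def IsGeodesicSegment {Z : Type*} [MetricSpace Z] (γ : ℝ → Z) (x y : Z) : Prop :=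
  γ 0 = x ∧ γ (dist x y) = y ∧
    ∀ s ∈ Set.Icc (0 : ℝ) (dist x y), ∀ t ∈ Set.Icc (0 : ℝ) (dist x y),
      dist (γ s) (γ t) = |s - t|

/-- A CAT(1) space: a metric space in which points at distance `< π` are joined by
geodesics, and every geodesic triangle of perimeter `< 2π` satisfies the comparison
inequality with respect to a comparison triangle on the unit sphere `S² ⊆ ℝ³` (spherical
distances being angles between unit vectors). -/
class CATOneSpace (Z : Type*) [MetricSpace Z] : Prop where
  exists_geodesic : ∀ x y : Z, dist x y < Real.pi → ∃ γ : ℝ → Z, IsGeodesicSegment γ x y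
  comparison : ∀ (x y z : Z) (γ : ℝ → Z), IsGeodesicSegment γ x y →
    dist x y + dist y z + dist z x < 2 * Real.pi →
    ∀ x' y' z' m' : EuclideanSpace ℝ (Fin 3),
      ‖x'‖ = 1 → ‖y'‖ = 1 → ‖z'‖ = 1 → ‖m'‖ = 1 →
      angle x' y' = dist x y → angle y' z' = dist y z → angle x' z' = dist x z →
      ∀ t ∈ Set.Icc (0 : ℝ) (dist x y),
        angle x' m' = t → angle m' y' = dist x y - t →
        dist z (γ t) ≤ angle z' m'

/-- Point on the equator circle of `S²`. -/
noncomputable def sphVec (θ : ℝ) : EuclideanSpace ℝ (Fin 3) :=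
  (WithLp.equiv 2 (Fin 3 → ℝ)).symm ![Real.cos θ, Real.sin θ, 0]

/-- North pole of `S²`. -/
noncomputable def sphPole : EuclideanSpace ℝ (Fin 3) :=
  (WithLp.equiv 2 (Fin 3 → ℝ)).symm ![0, 0, 1]

lemma norm_sphVec (θ : ℝ) : ‖sphVec θ‖ = 1 := by
  have h : Real.cos θ ^ 2 + Real.sin θ ^ 2 = 1 := Real.cos_sq_add_sin_sq θ
  simp [sphVec, EuclideanSpace.norm_eq, Fin.sum_univ_three, h]

lemma norm_sphPole : ‖sphPole‖ = 1 := by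
  simp [sphPole, EuclideanSpace.norm_eq, Fin.sum_univ_three]

lemma angle_sphVec (θ φ : ℝ) : angle (sphVec θ) (sphVec φ) = Real.arccos (Real.cos (θ - φ)) := by
  unfold InnerProductGeometry.angle
  rw [norm_sphVec, norm_sphVec]
  congr 1
  have : (inner ℝ (sphVec θ) (sphVec φ) : ℝ) = Real.cos θ * Real.cos φ + Real.sin θ * Real.sin φ := by
    simp [sphVec, PiLp.inner_apply, Fin.sum_univ_three]
    ring
  rw [this, ← Real.cos_sub]
  ring

lemma angle_sphVec_pole (θ : ℝ) : angle (sphVec θ) sphPole = Real.pi / 2 := by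
  unfold InnerProductGeometry.angle
  rw [norm_sphVec, norm_sphPole]
  have : (inner ℝ (sphVec θ) sphPole : ℝ) = 0 := by
    simp [sphVec, sphPole, PiLp.inner_apply, Fin.sum_univ_three]
  rw [this]
  simp [Real.arccos_zero]

lemma angle_pole_sphVec (θ : ℝ) : angle sphPole (sphVec θ) = Real.pi / 2 := by
  rw [InnerProductGeometry.angle_comm]; exact angle_sphVec_pole θ

/-- In a complete CAT(1) space `Z`, if `dist p q = π` then the equator
`E(p,q) = {x | dist p x = dist x q = π/2}` is closed and `π`-convex: for `a, b ∈ E(p,q)`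
with `dist a b < π`, every point of a geodesic segment from `a` to `b` lies in `E(p,q)`. -/
theorem equator_closed_and_pi_convex {Z : Type*} [MetricSpace Z] [CompleteSpace Z]
    [CATOneSpace Z] (p q : Z) (hpq : dist p q = Real.pi) :
    IsClosed {x : Z | dist p x = Real.pi / 2 ∧ dist x q = Real.pi / 2} ∧
    ∀ a ∈ {x : Z | dist p x = Real.pi / 2 ∧ dist x q = Real.pi / 2},
      ∀ b ∈ {x : Z | dist p x = Real.pi / 2 ∧ dist x q = Real.pi / 2},
        dist a b < Real.pi → ∀ γ : ℝ → Z, IsGeodesicSegment γ a b →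
          ∀ t ∈ Set.Icc (0 : ℝ) (dist a b),
            γ t ∈ {x : Z | dist p x = Real.pi / 2 ∧ dist x q = Real.pi / 2} := by
  constructor
  · have : {x : Z | dist p x = Real.pi / 2 ∧ dist x q = Real.pi / 2}
      = {x : Z | dist p x = Real.pi / 2} ∩ {x : Z | dist x q = Real.pi / 2} := rfl
    rw [this]
    exact (isClosed_eq (by fun_prop) continuous_const).inter
      (isClosed_eq (by fun_prop) continuous_const)
  · intro a ha b hb hab γ hγ t ht
    set d := dist a b with hd
    have hd0 : 0 ≤ d := dist_nonneg
    have ht0 : 0 ≤ t := ht.1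
    have htd : t ≤ d := ht.2
    have hpi : (0:ℝ) < Real.pi := Real.pi_pos
    -- generic lemma: for z with dist z a = dist z b = π/2, get dist z (γ t) ≤ π/2
    have key : ∀ z : Z, dist z a = Real.pi / 2 → dist z b = Real.pi / 2 →
        dist z (γ t) ≤ Real.pi / 2 := by
      intro z hza hzb
      have hper : d + dist b z + dist z a < 2 * Real.pi := by
        rw [dist_comm b z, hzb, hza]; linarith
      have hxy : angle (sphVec 0) (sphVec d) = d := by
        rw [angle_sphVec, zero_sub, Real.cos_neg, Real.arccos_cos hd0 hab.le]
      have hyz : angle (sphVec d) sphPole = dist b z := by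
        rw [angle_sphVec_pole, dist_comm b z, hzb]
      have hxz : angle (sphVec 0) sphPole = dist a z := by
        rw [angle_sphVec_pole, dist_comm a z, hza]
      have hxm : angle (sphVec 0) (sphVec t) = t := by
        rw [angle_sphVec, zero_sub, Real.cos_neg,
          Real.arccos_cos ht0 (htd.trans hab.le)]
      have hmy : angle (sphVec t) (sphVec d) = d - t := by
        rw [angle_sphVec, ← Real.cos_neg, neg_sub,
          Real.arccos_cos (by linarith) (by linarith)]
      have := CATOneSpace.comparison a b z γ hγ hper
        (sphVec 0) (sphVec d) sphPole (sphVec t)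
        (norm_sphVec 0) (norm_sphVec d) norm_sphPole (norm_sphVec t)
        hxy hyz hxz t ht hxm hmy
      calc dist z (γ t) ≤ angle sphPole (sphVec t) := this
        _ = Real.pi / 2 := angle_pole_sphVec t
    have hp : dist p (γ t) ≤ Real.pi / 2 := key p ha.1 hb.1
    have hq : dist q (γ t) ≤ Real.pi / 2 := by
      refine key q ?_ ?_
      · rw [dist_comm]; exact ha.2
      · rw [dist_comm]; exact hb.2
    have htri : Real.pi ≤ dist p (γ t) + dist q (γ t) := by
      rw [← hpq]
      calc dist p q ≤ dist p (γ t) + dist (γ t) q := dist_triangle _ _ _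
        _ = dist p (γ t) + dist q (γ t) := by rw [dist_comm (γ t) q]
    constructor
    · linarith
    · rw [dist_comm]; linarith
end

section
/- Let (Z, ρ) be a complete CAT(1) space and p, q ∈ Z with ρ(p,q) = π. Then the suspension set Σ(p,q) = {x ∈ Z | ρ(p,x) + ρ(x,q) = π} is closed and π-convex in Z. -/
open Set InnerProductGeometry
open Real (pi)
local notation "π" => Real.pi

noncomputable def sph (θ φ : ℝ) : EuclideanSpace ℝ (Fin 3) :=
  (WithLp.equiv 2 (Fin 3 → ℝ)).symm ![Real.cos θ, Real.sin θ * Real.cos φ, Real.sin θ * Real.sin φ]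

lemma norm_sph (θ φ : ℝ) : ‖sph θ φ‖ = 1 := by
  have h : Real.cos θ ^ 2 + ((Real.sin θ * Real.cos φ) ^2 + (Real.sin θ * Real.sin φ)^2) = 1 := by
    have := Real.sin_sq_add_cos_sq θ
    have := Real.sin_sq_add_cos_sq φ
    nlinarith
  simp [sph, EuclideanSpace.norm_eq, Fin.sum_univ_three]
  linarith

lemma inner_sph (θ₁ θ₂ φ : ℝ) :
    (inner ℝ (sph θ₁ 0) (sph θ₂ φ) : ℝ)
      = Real.cos θ₁ * Real.cos θ₂ + Real.sin θ₁ * Real.sin θ₂ * Real.cos φ := by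
  simp [sph, PiLp.inner_apply, Fin.sum_univ_three]
  ring

lemma angle_sph (θ₁ θ₂ φ : ℝ) :
    angle (sph θ₁ 0) (sph θ₂ φ) =
      Real.arccos (Real.cos θ₁ * Real.cos θ₂ + Real.sin θ₁ * Real.sin θ₂ * Real.cos φ) := by
  rw [angle, norm_sph, norm_sph, inner_sph]; norm_num

lemma angle_neg_unit (u v : EuclideanSpace ℝ (Fin 3)) (hu : ‖u‖ = 1) (hv : ‖v‖ = 1) :
    angle u (-v) = π - angle u v := by
  rw [angle, angle, hu, norm_neg, hv, inner_neg_right]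
  norm_num [Real.arccos_neg]

lemma F_nonneg (α c d : ℝ) (hd0 : 0 ≤ d) (hdπ : d ≤ π)
    (h1 : α ≤ c + d) (h2 : d ≤ α + c) (h3 : c ≤ α + d) (h4 : α + c + d ≤ 2*π) :
    (Real.cos d - Real.cos α * Real.cos c)^2 ≤ Real.sin α ^2 * Real.sin c ^2 := by
  have key : Real.sin α ^2 * Real.sin c ^2 - (Real.cos d - Real.cos α * Real.cos c)^2
      = (Real.cos (α - c) - Real.cos d) * (Real.cos d - Real.cos (α + c)) := by
    rw [Real.cos_sub, Real.cos_add]; ring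
  have f1 : Real.cos d ≤ Real.cos (α - c) := by
    rw [← Real.cos_abs (α - c)]
    exact Real.cos_le_cos_of_nonneg_of_le_pi (abs_nonneg _) hdπ (abs_le.2 ⟨by linarith, by linarith⟩)
  have f2 : Real.cos (α + c) ≤ Real.cos d := by
    rcases le_or_gt (α + c) π with h | h
    · exact Real.cos_le_cos_of_nonneg_of_le_pi hd0 h h2
    · have he : Real.cos (α + c) = Real.cos (2*π - (α + c)) := by
        rw [Real.cos_sub, Real.cos_two_pi, Real.sin_two_pi]; ring
      rw [he]
      exact Real.cos_le_cos_of_nonneg_of_le_pi hd0 (by linarith) (by linarith)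
  nlinarith [mul_nonneg (by linarith : (0:ℝ) ≤ Real.cos (α - c) - Real.cos d)
    (by linarith : (0:ℝ) ≤ Real.cos d - Real.cos (α + c))]

lemma exists_comp (α c d t : ℝ) (hα0 : 0 < α) (hαπ : α < π) (hc0 : 0 < c) (hcπ : c < π)
    (hd0 : 0 ≤ d) (hdπ : d ≤ π) (h1 : α ≤ c + d) (h2 : d ≤ α + c) (h3 : c ≤ α + d)
    (h4 : α + c + d ≤ 2*π) (ht0 : 0 ≤ t) (htα : t ≤ α) :
    ∃ a' b' z' m' : EuclideanSpace ℝ (Fin 3),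
      ‖a'‖ = 1 ∧ ‖b'‖ = 1 ∧ ‖z'‖ = 1 ∧ ‖m'‖ = 1 ∧
      angle a' b' = α ∧ angle a' z' = c ∧ angle b' z' = d ∧
      angle a' m' = t ∧ angle m' b' = α - t ∧
      angle z' m' + angle (-z') m' = π ∧
      angle a' (-z') = π - c ∧ angle b' (-z') = π - d ∧
      (c + d = α → angle z' m' = |t - c|) := by
  have hsα : 0 < Real.sin α := Real.sin_pos_of_pos_of_lt_pi hα0 hαπ
  have hsc : 0 < Real.sin c := Real.sin_pos_of_pos_of_lt_pi hc0 hcπ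
  set e : ℝ := (Real.cos d - Real.cos α * Real.cos c) / (Real.sin α * Real.sin c) with he
  have hF := F_nonneg α c d hd0 hdπ h1 h2 h3 h4
  have hsne : Real.sin α * Real.sin c ≠ 0 := by positivity
  have he2 : e^2 ≤ 1 := by
    rw [he, div_pow]
    rw [div_le_one (by positivity)]
    calc (Real.cos d - Real.cos α * Real.cos c)^2 ≤ Real.sin α ^2 * Real.sin c ^2 := hF
    _ = (Real.sin α * Real.sin c)^2 := by ring
  have heb : -1 ≤ e ∧ e ≤ 1 := abs_le_of_sq_le_sq' (by nlinarith) one_pos.le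
  set φ : ℝ := Real.arccos e with hφ
  have hcosφ : Real.cos φ = e := Real.cos_arccos heb.1 heb.2
  have hkey : Real.cos α * Real.cos c + Real.sin α * Real.sin c * e = Real.cos d := by
    rw [he]; field_simp; ring
  refine ⟨sph 0 0, sph α 0, sph c φ, sph t 0, norm_sph _ _, norm_sph _ _, norm_sph _ _,
    norm_sph _ _, ?_, ?_, ?_, ?_, ?_, ?_, ?_, ?_, ?_⟩
  · rw [angle_sph]; simp [Real.arccos_cos hα0.le hαπ.le]
  · rw [angle_sph]; simp [Real.arccos_cos hc0.le hcπ.le]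
  · rw [angle_sph, hcosφ, hkey]
    exact Real.arccos_cos hd0 hdπ
  · rw [angle_sph]; simp [Real.arccos_cos ht0 (htα.trans hαπ.le)]
  · rw [angle_sph]
    rw [show Real.cos t * Real.cos α + Real.sin t * Real.sin α * Real.cos 0
        = Real.cos (α - t) by rw [Real.cos_sub, Real.cos_zero]; ring]
    exact Real.arccos_cos (by linarith) (by linarith)
  · rw [angle_comm (sph c φ), angle_comm (-sph c φ), angle_neg_unit _ _ (norm_sph _ _) (norm_sph _ _)]
    ring
  · rw [angle_neg_unit _ _ (norm_sph _ _) (norm_sph _ _)]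
    rw [angle_sph]; simp [Real.arccos_cos hc0.le hcπ.le]
  · rw [angle_neg_unit _ _ (norm_sph _ _) (norm_sph _ _)]
    rw [angle_sph, hcosφ, hkey, Real.arccos_cos hd0 hdπ]
  · intro hdeg
    have hd' : d = α - c := by linarith
    have he1 : e = 1 := by
      rw [he, hd', Real.cos_sub]
      field_simp
      ring
    rw [angle_comm, angle_sph, hcosφ, he1, mul_one]
    rw [show Real.cos t * Real.cos c + Real.sin t * Real.sin c = Real.cos (t - c) by
      rw [Real.cos_sub]]
    rcases le_or_gt c t with h | h
    · rw [Real.arccos_cos (by linarith) (by linarith), abs_of_nonneg (by linarith)]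
    · rw [show t - c = -(c - t) by ring, Real.cos_neg,
        Real.arccos_cos (by linarith) (by linarith), abs_of_neg (by linarith)]
      ring

/-- In a complete CAT(1) space `Z`, if `dist p q = π` then the suspension
set `Σ(p,q) = {x | dist p x + dist x q = π}` is closed and `π`-convex: for `a, b ∈ Σ(p,q)`
with `dist a b < π`, every point of a geodesic segment from `a` to `b` lies in `Σ(p,q)`. -/
theorem suspension_closed_and_pi_convex {Z : Type*} [MetricSpace Z] [CompleteSpace Z]
    [CATOneSpace Z] (p q : Z) (hpq : dist p q = Real.pi) :
    IsClosed {x : Z | dist p x + dist x q = Real.pi} ∧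
    ∀ a ∈ {x : Z | dist p x + dist x q = Real.pi},
      ∀ b ∈ {x : Z | dist p x + dist x q = Real.pi},
        dist a b < Real.pi → ∀ γ : ℝ → Z, IsGeodesicSegment γ a b →
          ∀ t ∈ Set.Icc (0 : ℝ) (dist a b),
            γ t ∈ {x : Z | dist p x + dist x q = Real.pi} := by
  constructor
  · exact isClosed_eq ((continuous_const.dist continuous_id).add
      (continuous_id.dist continuous_const)) continuous_const
  · intro a ha b hb hab γ hγ t ht
    simp only [Set.mem_setOf_eq] at ha hb ⊢
    obtain ⟨hγ0, hγ1, hγd⟩ := hγ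
    have ht0 : 0 ≤ t := ht.1
    have htα : t ≤ dist a b := ht.2
    have hα0' : (0:ℝ) ≤ dist a b := dist_nonneg
    have ham : dist a (γ t) = t := by
      have := hγd 0 ⟨le_refl 0, dist_nonneg⟩ t ht
      rw [hγ0] at this
      rw [this, abs_of_nonpos (by linarith)]; ring
    have hbm : dist b (γ t) = dist a b - t := by
      have := hγd (dist a b) ⟨dist_nonneg, le_refl _⟩ t ht
      rw [hγ1] at this
      rw [this, abs_of_nonneg (by linarith)]
    have hlow : Real.pi ≤ dist p (γ t) + dist (γ t) q := by
      rw [← hpq]; exact dist_triangle p (γ t) q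
    have hmq : dist (γ t) q = dist q (γ t) := dist_comm _ _
    have hpa : dist p a = dist a p := dist_comm _ _
    have hpb : dist p b = dist b p := dist_comm _ _
    have haq2 : dist a q = dist q a := dist_comm _ _
    have hbq2 : dist b q = dist q b := dist_comm _ _
    have haq : dist a q = Real.pi - dist p a := by linarith
    have hbq : dist b q = Real.pi - dist p b := by linarith
    have hc0 : 0 ≤ dist p a := dist_nonneg
    have hcπ : dist p a ≤ Real.pi := by
      have : (0:ℝ) ≤ dist a q := dist_nonneg
      linarith
    have hd0 : 0 ≤ dist p b := dist_nonneg
    have hdπ : dist p b ≤ Real.pi := by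
      have : (0:ℝ) ≤ dist b q := dist_nonneg
      linarith
    have h1 : dist a b ≤ dist p a + dist p b := by
      have := dist_triangle a p b
      linarith
    have h2 : dist p b ≤ dist a b + dist p a := by
      have := dist_triangle p a b
      linarith
    have h3 : dist p a ≤ dist a b + dist p b := by
      have := dist_triangle p b a
      have hba : dist b a = dist a b := dist_comm _ _
      linarith
    have hq1 : dist a b + dist p a + dist p b ≤ 2 * Real.pi := by
      have := dist_triangle a q b
      have hqb : dist q b = dist b q := dist_comm _ _
      linarith
    -- Case: a = b (degenerate segment)
    rcases eq_or_lt_of_le hα0' with h0 | hα0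
    · have htz : t = 0 := le_antisymm (by linarith) ht0
      rw [htz, hγ0]; exact ha
    -- Case: p = a
    rcases eq_or_lt_of_le hc0 with hc | hc0'
    · have hpa' : p = a := by
        rw [dist_eq_zero.mp hc.symm]
      have h5 : dist p (γ t) = t := by rw [hpa']; exact ham
      have h6 : dist p b = dist a b := by rw [hpa']
      have h7 : dist (γ t) q ≤ dist (γ t) b + dist b q := dist_triangle _ _ _
      have h8 : dist (γ t) b = dist b (γ t) := dist_comm _ _
      linarith
    -- Case: a = q
    rcases eq_or_lt_of_le hcπ with hcπ' | hcπ'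
    · have haq0 : a = q := dist_eq_zero.mp (by linarith)
      have h5 : dist (γ t) q = t := by rw [← haq0, dist_comm, ham]
      have h6 : dist b q = dist a b := by rw [← haq0, dist_comm]
      have h7 : dist p (γ t) ≤ dist p b + dist b (γ t) := dist_triangle _ _ _
      linarith
    -- Main case: use spherical comparison
    rcases eq_or_lt_of_le h1 with hdeg | hstrict
    · -- degenerate: p lies "between" a and b
      obtain ⟨a', b', z', m', n1, n2, n3, n4, g1, g2, g3, g4, g5, g6, g7, g8, g9⟩ :=
        exists_comp (dist a b) (dist p a) (dist p b) t hα0 hab hc0' hcπ'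
          hd0 hdπ (le_of_eq hdeg) h2 h3 (by linarith) ht0 htα
      have hcmp := CATOneSpace.comparison a b p γ ⟨hγ0, hγ1, hγd⟩
        (by linarith) a' b' z' m' n1 n2 n3 n4 g1
        (by rw [g3, hpb]) (by rw [g2, hpa]) t ht g4 g5
      rw [g9 hdeg.symm] at hcmp
      have h7 : dist (γ t) q ≤ dist (γ t) a + dist a q := dist_triangle _ _ _
      have h8 : dist (γ t) q ≤ dist (γ t) b + dist b q := dist_triangle _ _ _
      have h9 : dist (γ t) a = dist a (γ t) := dist_comm _ _
      have h10 : dist (γ t) b = dist b (γ t) := dist_comm _ _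
      rcases abs_cases (t - dist p a) with ⟨hA, _⟩ | ⟨hA, _⟩ <;> linarith
    rcases eq_or_lt_of_le hq1 with hdeg2 | hstrict2
    · -- degenerate: q lies "between" a and b
      obtain ⟨a', b', z', m', n1, n2, n3, n4, g1, g2, g3, g4, g5, g6, g7, g8, g9⟩ :=
        exists_comp (dist a b) (Real.pi - dist p a) (Real.pi - dist p b) t hα0 hab
          (by linarith) (by linarith) (by linarith) (by linarith)
          (by linarith) (by linarith) (by linarith) (by linarith) ht0 htα
      have hcmp := CATOneSpace.comparison a b q γ ⟨hγ0, hγ1, hγd⟩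
        (by linarith) a' b' z' m' n1 n2 n3 n4 g1
        (by rw [g3, ← hbq, hbq2]) (by rw [g2, ← haq, haq2]) t ht g4 g5
      rw [g9 (by linarith)] at hcmp
      have h7 : dist p (γ t) ≤ dist p a + dist a (γ t) := dist_triangle _ _ _
      have h8 : dist p (γ t) ≤ dist p b + dist b (γ t) := dist_triangle _ _ _
      rcases abs_cases (t - (Real.pi - dist p a)) with ⟨hA, _⟩ | ⟨hA, _⟩ <;> linarith
    · -- generic case: two comparisons with antipodal comparison points
      obtain ⟨a', b', z', m', n1, n2, n3, n4, g1, g2, g3, g4, g5, g6, g7, g8, g9⟩ :=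
        exists_comp (dist a b) (dist p a) (dist p b) t hα0 hab hc0' hcπ'
          hd0 hdπ h1 h2 h3 (by linarith) ht0 htα
      have hcmp1 := CATOneSpace.comparison a b p γ ⟨hγ0, hγ1, hγd⟩
        (by linarith) a' b' z' m' n1 n2 n3 n4 g1
        (by rw [g3, hpb]) (by rw [g2, hpa]) t ht g4 g5
      have hcmp2 := CATOneSpace.comparison a b q γ ⟨hγ0, hγ1, hγd⟩
        (by linarith) a' b' (-z') m' n1 n2 (by rw [norm_neg, n3]) n4 g1
        (by rw [g8, ← hbq, hbq2]) (by rw [g7, ← haq, haq2]) t ht g4 g5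
      linarith
end

section
/- Let K be a compact metric space, K' a metric space isometric to K, and f : K → K' a surjective 1-Lipschitz map. Then f is an isometry. -/
open Metric Finset in
lemma key_self_map {K : Type*} [MetricSpace K] [CompactSpace K]
    (g : K → K) (hg : LipschitzWith 1 g) (hsurj : Function.Surjective g) :
    Isometry g := by
  rcases isEmpty_or_nonempty K with hK | hK
  · exact Isometry.of_dist_eq fun x => (IsEmpty.false x).elim
  refine Isometry.of_dist_eq fun a b => ?_
  have hlip : ∀ x y : K, dist (g x) (g y) ≤ dist x y := by
    intro x y; simpa using hg.dist_le_mul x y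
  by_contra hne
  have hab : dist (g a) (g b) < dist a b := lt_of_le_of_ne (hlip a b) hne
  set δ : ℝ := dist a b - dist (g a) (g b) with hδ
  have hδpos : 0 < δ := by simp [hδ]; linarith
  set ε : ℝ := δ / 5 with hε
  have hεpos : 0 < ε := by positivity
  -- separated tuples
  classical
  set sep : ℕ → Prop := fun n => ∃ p : Fin n → K,
    ∀ i j, i ≠ j → ε ≤ dist (p i) (p j) with hsep
  -- bound on cardinality of separated tuples
  obtain ⟨t, htfin, htcov⟩ := totallyBounded_iff.1
    ((isCompact_univ : IsCompact (Set.univ : Set K)).totallyBounded) (ε / 2) (by positivity)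
  haveI : Fintype t := htfin.fintype
  have hbound : ∀ n, sep n → n ≤ Fintype.card t := by
    intro n ⟨p, hp⟩
    have : ∀ i : Fin n, ∃ y : t, p i ∈ ball (y : K) (ε / 2) := by
      intro i
      have := htcov (Set.mem_univ (p i))
      simp only [Set.mem_iUnion] at this
      obtain ⟨y, hy, hmem⟩ := this
      exact ⟨⟨y, hy⟩, hmem⟩
    choose F hF using this
    have hinj : Function.Injective F := by
      intro i j hij
      by_contra hne'
      have h1 := hF i
      have h2 := hF j
      rw [hij] at h1
      have : dist (p i) (p j) < ε := by
        calc dist (p i) (p j) ≤ dist (p i) (F j : K) + dist (F j : K) (p j) :=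
              dist_triangle _ _ _
          _ < ε / 2 + ε / 2 := by
              rw [mem_ball] at h1 h2
              rw [dist_comm (F j : K) (p j)]; linarith
          _ = ε := by ring
      exact absurd this (not_lt.2 (hp i j hne'))
    simpa using Fintype.card_le_of_injective F hinj
  set N := Fintype.card t with hN
  set n := Nat.findGreatest sep N with hn
  have hsep1 : sep 1 := ⟨fun _ => hK.some, fun i j hij => absurd (Subsingleton.elim i j) hij⟩
  have hsepn : sep n := Nat.findGreatest_spec (hbound 1 hsep1) hsep1
  -- the set of separated n-tuples is compact
  set S : Set (Fin n → K) := {p | ∀ i j, i ≠ j → ε ≤ dist (p i) (p j)} with hS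
  have hSclosed : IsClosed S := by
    have : S = ⋂ (i : Fin n), ⋂ (j : Fin n),
        {p : Fin n → K | i ≠ j → ε ≤ dist (p i) (p j)} := by
      ext p; simp [hS, Set.mem_iInter]
    rw [this]
    refine isClosed_iInter fun i => isClosed_iInter fun j => ?_
    by_cases hij : i = j
    · simp [hij]
    · have : {p : Fin n → K | i ≠ j → ε ≤ dist (p i) (p j)}
          = {p : Fin n → K | ε ≤ dist (p i) (p j)} := by
        ext p; simp [hij]
      rw [this]
      exact isClosed_le continuous_const ((continuous_apply i).dist (continuous_apply j))
  have hScomp : IsCompact S := hSclosed.isCompact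
  have hSne : S.Nonempty := hsepn
  set F : (Fin n → K) → ℝ := fun p => ∑ ij : Fin n × Fin n, dist (p ij.1) (p ij.2) with hF
  have hFcont : Continuous F := by
    apply continuous_finset_sum
    intro ij _
    exact (continuous_apply ij.1).dist (continuous_apply ij.2)
  obtain ⟨u, huS, humax⟩ := hScomp.exists_isMaxOn hSne hFcont.continuousOn
  -- preimages
  choose w hw using fun i => hsurj (u i)
  have hwS : w ∈ S := by
    intro i j hij
    calc ε ≤ dist (u i) (u j) := huS i j hij
      _ = dist (g (w i)) (g (w j)) := by rw [hw i, hw j]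
      _ ≤ dist (w i) (w j) := hlip _ _
  have hle : ∀ i j : Fin n, dist (u i) (u j) ≤ dist (w i) (w j) := by
    intro i j
    calc dist (u i) (u j) = dist (g (w i)) (g (w j)) := by rw [hw i, hw j]
      _ ≤ dist (w i) (w j) := hlip _ _
  have heq : ∀ i j : Fin n, dist (w i) (w j) = dist (u i) (u j) := by
    by_contra hcon
    push_neg at hcon
    obtain ⟨i, j, hij⟩ := hcon
    have hstrict : dist (u i) (u j) < dist (w i) (w j) :=
      lt_of_le_of_ne (hle i j) (Ne.symm hij)
    have : F u < F w := by
      apply Finset.sum_lt_sum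
      · intro ij _; exact hle ij.1 ij.2
      · exact ⟨(i, j), Finset.mem_univ _, hstrict⟩
    exact absurd (humax hwS) (not_le.2 this)
  -- w is an ε-net
  have hnet : ∀ z : K, ∃ i, dist z (w i) < ε := by
    intro z
    by_contra hcon
    push_neg at hcon
    have hsepn1 : sep (n + 1) := by
      refine ⟨Fin.cons z w, fun i j hij => ?_⟩
      rcases Fin.eq_zero_or_eq_succ i with hi0 | ⟨i', hi'⟩ <;>
        rcases Fin.eq_zero_or_eq_succ j with hj0 | ⟨j', hj'⟩ <;> subst_vars
      · exact absurd rfl hij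
      · simpa using hcon j'
      · simpa [dist_comm z] using hcon i'
      · have hne' : i' ≠ j' := fun hh => hij (by rw [hh])
        simpa using hwS i' j' hne'
    have h1 : n + 1 ≤ N := hbound (n + 1) hsepn1
    have h2 : n < n + 1 := Nat.lt_succ_self n
    exact Nat.findGreatest_is_greatest h2 h1 hsepn1
  obtain ⟨i, hi⟩ := hnet a
  obtain ⟨j, hj⟩ := hnet b
  have h1 : dist a b ≤ dist a (w i) + dist (w i) (w j) + dist (w j) b :=
    dist_triangle4 _ _ _ _
  have h2 : dist (w i) (w j) = dist (u i) (u j) := heq i j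
  have h3 : dist (u i) (u j) ≤ dist (u i) (g a) + dist (g a) (g b) + dist (g b) (u j) :=
    dist_triangle4 _ _ _ _
  have h4 : dist (u i) (g a) ≤ dist a (w i) := by
    rw [← hw i, dist_comm]; exact hlip _ _
  have h5 : dist (g b) (u j) ≤ dist b (w j) := by
    rw [← hw j]; exact hlip _ _
  have h6 : dist (w j) b = dist b (w j) := dist_comm _ _
  have : dist a b < dist (g a) (g b) + 4 * ε := by linarith
  rw [hε] at this
  linarith

/-- A surjective `1`-Lipschitz map from a compact metric space onto a
metric space isometric to it is an isometry. -/
theorem surjective_lipschitz_one_of_isometric_compact_is_isometry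
    {K K' : Type*} [MetricSpace K] [CompactSpace K] [MetricSpace K']
    (h : Nonempty (K ≃ᵢ K')) (f : K → K') (hf : LipschitzWith 1 f)
    (hsurj : Function.Surjective f) : Isometry f := by
  obtain ⟨e⟩ := h
  set g : K → K := e.symm ∘ f with hg
  have hglip : LipschitzWith 1 g := by
    have := (e.symm.isometry.lipschitz).comp hf
    simpa using this
  have hgsurj : Function.Surjective g := e.symm.surjective.comp hsurj
  have hgiso : Isometry g := key_self_map g hglip hgsurj
  refine Isometry.of_dist_eq fun x y => ?_
  calc dist (f x) (f y) = dist (e.symm (f x)) (e.symm (f y)) :=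
        (e.symm.isometry.dist_eq _ _).symm
    _ = dist x y := hgiso.dist_eq x y
end

section
/- Let d ≥ 1 and let N be a nonempty closed subset of the unit round sphere S^d (with the angular metric) such that the closed hemispheres {H_n}_{n∈N} centered at points of N cover S^d. If the diameter of N is strictly less than arccos(−1/(d+1)), then N has a circumcenter z with circumradius less than π/2, and the antipode of z is not covered by any hemisphere H_n — a contradiction. Hence any closed set N ⊆ S^d whose centered closed hemispheres cover S^d must have diameter at least arccos(−1/(d+1)). -/
open InnerProductGeometry Metric
open scoped RealInnerProductSpace

/-- Let `d ≥ 1` and let `N` be a nonempty closed subset of the unit round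
sphere `S^d ⊆ ℝ^{d+1}` (with the angular metric, i.e. the angle between unit vectors) such
that the closed hemispheres centered at the points of `N` cover the whole sphere.  Then the
diameter of `N` is at least `arccos (−1/(d+1))`: there are points `a, b ∈ N` with
`angle a b ≥ arccos (−1/(d+1))`. -/
theorem hemisphere_cover_diameter_bound (d : ℕ) (hd : 1 ≤ d)
    (N : Set (EuclideanSpace ℝ (Fin (d + 1))))
    (hNsub : N ⊆ sphere (0 : EuclideanSpace ℝ (Fin (d + 1))) 1)
    (hNne : N.Nonempty) (hNcl : IsClosed N)
    (hcover : ∀ x ∈ sphere (0 : EuclideanSpace ℝ (Fin (d + 1))) 1,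
      ∃ n ∈ N, angle n x ≤ Real.pi / 2) :
    ∃ a ∈ N, ∃ b ∈ N, Real.arccos (-(1 / (d + 1))) ≤ angle a b := by
  classical
  by_contra hcon
  push_neg at hcon
  have hd1 : (0:ℝ) < (d:ℝ) + 1 := by positivity
  have hd2 : (0:ℝ) < (d:ℝ) + 2 := by positivity
  have hnorm : ∀ a ∈ N, ‖a‖ = 1 := fun a ha => mem_sphere_zero_iff_norm.1 (hNsub ha)
  have hNcomp : IsCompact N :=
    (isCompact_sphere (0 : EuclideanSpace ℝ (Fin (d + 1))) 1).of_isClosed_subset hNcl hNsub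
  -- minimum of the inner product over N × N
  obtain ⟨⟨a₀, b₀⟩, hab₀, hmin⟩ :=
    (hNcomp.prod hNcomp).exists_isMinOn (hNne.prod hNne)
      ((continuous_fst.inner continuous_snd).continuousOn :
        ContinuousOn (fun p : EuclideanSpace ℝ (Fin (d+1)) × EuclideanSpace ℝ (Fin (d+1)) =>
          ⟪p.1, p.2⟫) _)
  set c : ℝ := ⟪a₀, b₀⟫ with hc
  obtain ⟨ha₀, hb₀⟩ := hab₀
  have hcmin : ∀ a ∈ N, ∀ b ∈ N, c ≤ ⟪a, b⟫ := fun a ha b hb =>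
    isMinOn_iff.1 hmin (a, b) (Set.mem_prod.2 ⟨ha, hb⟩)
  have h1d : (1:ℝ)/((d:ℝ)+1) ≤ 1 := by
    rw [div_le_one hd1]; linarith
  have h1d0 : (0:ℝ) < 1/((d:ℝ)+1) := by positivity
  -- c > -(1/(d+1))
  have hc_lt : -(1/((d:ℝ)+1)) < c := by
    have hang := hcon a₀ ha₀ b₀ hb₀
    have hcc : Real.cos (Real.arccos (-(1/((d:ℝ)+1)))) < Real.cos (angle a₀ b₀) :=
      Real.cos_lt_cos_of_nonneg_of_le_pi (angle_nonneg _ _) (Real.arccos_le_pi _) hang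
    rw [Real.cos_arccos (by linarith) (by linarith [h1d0])] at hcc
    rw [cos_angle, hnorm a₀ ha₀, hnorm b₀ hb₀] at hcc
    simpa using hcc
  have hc1 : c ≤ 1 := by
    have := real_inner_le_norm a₀ b₀
    rwa [hnorm a₀ ha₀, hnorm b₀ hb₀, mul_one] at this
  set m : ℝ := c + (1 - c) / ((d:ℝ) + 2) with hmdef
  have hm : 0 < m := by
    have h1 : -1 < c * ((d:ℝ)+1) := by
      have he : (1/((d:ℝ)+1)) * ((d:ℝ)+1) = 1 := by field_simp
      nlinarith [mul_lt_mul_of_pos_right hc_lt hd1]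
    have : m = (c * ((d:ℝ)+1) + 1) / ((d:ℝ)+2) := by
      rw [hmdef, eq_div_iff hd2.ne', add_mul, div_mul_cancel₀ _ hd2.ne']; ring
    rw [this]
    apply div_pos (by linarith) hd2
  -- uniform lower bound on the convex hull
  have hlow : ∀ x ∈ convexHull ℝ N, m ≤ ⟪x, x⟫ := by
    intro x hx
    rw [convexHull_eq_union] at hx
    simp only [Set.mem_iUnion] at hx
    obtain ⟨t, hts, hai, hx⟩ := hx
    have hcard : (t.card : ℝ) ≤ (d:ℝ) + 2 := by
      have h1 := hai.card_le_finrank_succ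
      have h2 : Module.finrank ℝ
          (vectorSpan ℝ (Set.range ((↑) : t → EuclideanSpace ℝ (Fin (d+1))))) ≤ d + 1 := by
        simpa [finrank_euclideanSpace_fin] using
          (Submodule.finrank_le
            (vectorSpan ℝ (Set.range ((↑) : t → EuclideanSpace ℝ (Fin (d+1))))))
      have h3 : Fintype.card t = t.card := Fintype.card_coe t
      have : t.card ≤ d + 2 := by omega
      exact_mod_cast this
    rw [Finset.convexHull_eq] at hx
    obtain ⟨w, hw0, hw1, hxw⟩ := hx
    rw [Finset.centerMass_eq_of_sum_1 _ _ hw1] at hxw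
    set S : ℝ := ∑ y ∈ t, (w y)^2 with hSdef
    have hS0 : 0 ≤ S := Finset.sum_nonneg fun y _ => sq_nonneg _
    have hSk : 1 ≤ ((d:ℝ) + 2) * S := by
      have h4 : ((∑ y ∈ t, w y) ^ 2 : ℝ) ≤ (t.card : ℝ) * S := by
        exact_mod_cast sq_sum_le_card_mul_sum_sq (s := t) (f := w)
      rw [hw1, one_pow] at h4
      calc (1:ℝ) ≤ (t.card : ℝ) * S := h4
        _ ≤ ((d:ℝ) + 2) * S := mul_le_mul_of_nonneg_right hcard hS0
    have hxx : ⟪x, x⟫ = ∑ i ∈ t, ∑ j ∈ t, w i * (w j * ⟪i, j⟫) := by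
      rw [← hxw]
      rw [sum_inner]
      refine Finset.sum_congr rfl fun i _ => ?_
      rw [inner_sum]
      refine Finset.sum_congr rfl fun j _ => ?_
      simp only [id_eq, real_inner_smul_left, real_inner_smul_right]
      ring
    have hterm : ∀ i ∈ t, ∀ j ∈ t,
        w i * w j * c + (if i = j then (w i)^2 * (1 - c) else 0) ≤ w i * (w j * ⟪i, j⟫) := by
      intro i hi j hj
      have hiN : (i : EuclideanSpace ℝ (Fin (d+1))) ∈ N := hts hi
      have hjN : (j : EuclideanSpace ℝ (Fin (d+1))) ∈ N := hts hj
      by_cases hij : i = j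
      · subst hij
        have hii : ⟪i, i⟫ = 1 := by
          rw [real_inner_self_eq_norm_sq, hnorm i hiN]; norm_num
        rw [if_pos rfl, hii]
        ring_nf
        nlinarith [sq_nonneg (w i)]
      · rw [if_neg hij, add_zero, mul_assoc]
        have := hcmin i hiN j hjN
        have hwij : 0 ≤ w i * w j := mul_nonneg (hw0 i hi) (hw0 j hj)
        nlinarith
    have hsum : c + (1 - c) * S ≤ ⟪x, x⟫ := by
      rw [hxx]
      have hle : ∑ i ∈ t, ∑ j ∈ t,
          (w i * w j * c + (if i = j then (w i)^2 * (1 - c) else 0))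
          ≤ ∑ i ∈ t, ∑ j ∈ t, w i * (w j * ⟪i, j⟫) := by
        refine Finset.sum_le_sum fun i hi => Finset.sum_le_sum fun j hj => hterm i hi j hj
      refine le_trans (le_of_eq ?_) hle
      rw [Finset.sum_comm (s := t) (t := t)
        (f := fun i j => w i * w j * c + (if i = j then (w i)^2 * (1 - c) else 0))]
      have e1 : ∀ j ∈ t, ∑ i ∈ t,
          (w i * w j * c + (if i = j then (w i)^2 * (1 - c) else 0))
          = (∑ i ∈ t, w i * w j * c) + (w j)^2 * (1 - c) := by
        intro j hj
        rw [Finset.sum_add_distrib]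
        congr 1
        rw [Finset.sum_ite_eq' t j (fun i => (w i)^2 * (1 - c)), if_pos hj]
      rw [Finset.sum_congr rfl e1, Finset.sum_add_distrib]
      have e2 : ∑ j ∈ t, ∑ i ∈ t, w i * w j * c = c := by
        have : ∀ j ∈ t, ∑ i ∈ t, w i * w j * c = w j * c := by
          intro j hj
          rw [← Finset.sum_mul, ← Finset.sum_mul, hw1, one_mul]
        rw [Finset.sum_congr rfl this, ← Finset.sum_mul, hw1, one_mul]
      have e3 : ∑ j ∈ t, (w j)^2 * (1 - c) = (1 - c) * S := by
        rw [← Finset.sum_mul, mul_comm]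
      rw [e2, e3]
    have hfin : m ≤ c + (1 - c) * S := by
      rw [hmdef]
      have h5 : 0 ≤ (1 - c) * (((d:ℝ)+2) * S - 1) :=
        mul_nonneg (by linarith) (by linarith)
      have h6 : (1 - c) / ((d:ℝ)+2) ≤ (1 - c) * S := by
        rw [div_le_iff₀ hd2]; nlinarith
      linarith
    linarith
  -- 0 is not in the closure of the convex hull
  have h0notin : (0 : EuclideanSpace ℝ (Fin (d+1))) ∉ closure (convexHull ℝ N) := by
    intro h0
    have hclsub : closure (convexHull ℝ N) ⊆
        {x : EuclideanSpace ℝ (Fin (d+1)) | m ≤ ⟪x, x⟫} :=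
      closure_minimal hlow (isClosed_le continuous_const (continuous_id.inner continuous_id))
    have : m ≤ ⟪(0 : EuclideanSpace ℝ (Fin (d+1))), (0 : EuclideanSpace ℝ (Fin (d+1)))⟫ :=
      hclsub h0
    rw [inner_zero_left] at this
    linarith
  -- separation
  obtain ⟨f, u, hfu, hfb⟩ := geometric_hahn_banach_point_closed
    ((convex_convexHull ℝ N).closure) isClosed_closure h0notin
  have hu : 0 < u := by simpa using hfu
  set v := (InnerProductSpace.toDual ℝ (EuclideanSpace ℝ (Fin (d+1)))).symm f with hv
  have hva : ∀ a ∈ N, u < ⟪v, a⟫ := by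
    intro a ha
    rw [hv, InnerProductSpace.toDual_symm_apply]
    exact hfb a (subset_closure (subset_convexHull ℝ N ha))
  obtain ⟨a₁, ha₁⟩ := hNne
  have hv0 : v ≠ 0 := by
    intro h
    have := hva a₁ ha₁
    rw [h, inner_zero_left] at this
    linarith
  have hvn : 0 < ‖v‖ := norm_pos_iff.2 hv0
  set x : EuclideanSpace ℝ (Fin (d+1)) := -(‖v‖⁻¹ • v) with hxdef
  have hxs : x ∈ sphere (0 : EuclideanSpace ℝ (Fin (d+1))) 1 := by
    rw [mem_sphere_zero_iff_norm, hxdef, norm_neg, norm_smul, norm_inv, norm_norm]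
    exact inv_mul_cancel₀ (ne_of_gt hvn)
  obtain ⟨n, hnN, hang⟩ := hcover x hxs
  have hcosnn : 0 ≤ Real.cos (angle n x) := by
    refine Real.cos_nonneg_of_mem_Icc ⟨?_, hang⟩
    have := angle_nonneg n x
    have := Real.pi_pos
    linarith
  have hge : 0 ≤ ⟪n, x⟫ := by
    have hcos := cos_angle n x
    rw [hnorm n hnN, mem_sphere_zero_iff_norm.1 hxs] at hcos
    simp only [mul_one, div_one] at hcos
    rw [hcos] at hcosnn
    exact hcosnn
  have hlt : ⟪n, x⟫ < 0 := by
    have hinner : ⟪n, x⟫ = -(‖v‖⁻¹ * ⟪v, n⟫) := by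
      rw [hxdef, inner_neg_right, real_inner_smul_right, real_inner_comm]
    rw [hinner, neg_lt_zero]
    exact mul_pos (inv_pos.2 hvn) (lt_trans hu (hva n hnN))
  linarith
end

section
/- Let Z be a compact Hausdorff space with a discrete group G acting by homeomorphisms, and let Tω denote the ultrafilter-limit operators for ω ∈ βG. Suppose D : Z × Z → [0, ∞] satisfies D(Tω x, Tω y) ≤ D(x, y) for all ω, x, y, and suppose no pair of distinct points is 'incompressible', i.e., for all x ≠ y there is ω with D(Tω x, Tω y) < D(x,y). Define the G-compression comp_G(x,y) = sup over ω of (D(x,y) − D(Tω x, Tω y)), and assume this supremum is attained for every pair (x,y). Then one obtains a contradiction unless for every pair x, y there exist ω with Tω x = Tω y; that is, every pair of points is proximal (collapsible). -/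
open Filter Topology

attribute [local instance] Ultrafilter.mul

theorem Tmul_aux {G Z : Type*} [Group G]
    [TopologicalSpace Z] [CompactSpace Z] [T2Space Z] [MulAction G Z]
    (hcont : ∀ g : G, Continuous fun z : Z => g • z)
    (T : Ultrafilter G → Z → Z)
    (hT : ∀ (ω : Ultrafilter G) (z : Z), Tendsto (fun g : G => g • z) ω (𝓝 (T ω z)))
    (ν ω : Ultrafilter G) (z : Z) : T (ν * ω) z = T ν (T ω z) := by
  refine tendsto_nhds_unique (hT _ z) ?_
  rw [tendsto_def]
  intro U hU
  obtain ⟨V, hVU, hVopen, hVmem⟩ := mem_nhds_iff.mp hU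
  have : ∀ᶠ g in (↑(ν * ω) : Filter G), g • z ∈ U := by
    rw [Ultrafilter.eventually_mul]
    filter_upwards [(hT ν (T ω z)).eventually (hVopen.mem_nhds hVmem)] with a ha
    have h2 : Tendsto (fun b : G => a • (b • z)) ω (𝓝 (a • T ω z)) :=
      ((hcont a).tendsto _).comp (hT ω z)
    filter_upwards [h2.eventually (hVopen.mem_nhds ha)] with b hb
    exact hVU (by simpa [mul_smul] using (show a • b • z ∈ V from hb))
  exact this

/-- Let `Z` be a compact Hausdorff space with a discrete group `G` acting
by homeomorphisms, and let `T ω` be the ultrafilter-limit operators (`T ω z` is the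
`ω`-limit of `g ↦ g • z`).  Suppose `D : Z × Z → [0,∞)` satisfies
`D (T ω x) (T ω y) ≤ D x y` for all `ω, x, y`, that no pair of distinct points is
incompressible (for all `x ≠ y` there is `ω` with `D (T ω x) (T ω y) < D x y`), and that
the `G`-compression `sup_ω (D x y − D (T ω x) (T ω y))` is attained for every pair.
Then every pair of points is proximal: for all `x y` there is `ω` with `T ω x = T ω y`. -/
theorem all_pairs_proximal_of_no_incompressible_pair {G Z : Type*} [Group G]
    [TopologicalSpace Z] [CompactSpace Z] [T2Space Z] [MulAction G Z]
    (hcont : ∀ g : G, Continuous fun z : Z => g • z)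
    (T : Ultrafilter G → Z → Z)
    (hT : ∀ (ω : Ultrafilter G) (z : Z), Tendsto (fun g : G => g • z) ω (𝓝 (T ω z)))
    (D : Z → Z → ℝ) (hDnonneg : ∀ x y, 0 ≤ D x y)
    (hmono : ∀ (ω : Ultrafilter G) (x y : Z), D (T ω x) (T ω y) ≤ D x y)
    (hcomp : ∀ x y : Z, x ≠ y → ∃ ω : Ultrafilter G, D (T ω x) (T ω y) < D x y)
    (hattain : ∀ x y : Z, ∃ ω : Ultrafilter G, ∀ ν : Ultrafilter G,
      D x y - D (T ν x) (T ν y) ≤ D x y - D (T ω x) (T ω y)) :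
    ∀ x y : Z, ∃ ω : Ultrafilter G, T ω x = T ω y := by
  intro x y
  obtain ⟨ω, hω⟩ := hattain x y
  refine ⟨ω, ?_⟩
  by_contra hne
  obtain ⟨ν, hν⟩ := hcomp _ _ hne
  have h1 := hω (ν * ω)
  rw [Tmul_aux hcont T hT ν ω x, Tmul_aux hcont T hT ν ω y] at h1
  linarith
end
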